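/- Let T be a positively edge-weighted phylogenetic X-tree with |X| = n ≥ 4 and let D = D_T be its induced tree metric. Define Q_D(i,j) = (n−2)·D(i,j) − Σ_{k∈X, k≠i} D(i,k) − Σ_{k∈X, k≠j} D(j,k) for distinct i, j ∈ X. If the pair (x,y) of distinct leaves minimizes Q_D over all pairs of distinct leaves, then x and y form a cherry in T. -/

import Mathlib

open SimpleGraph Finset

attribute [local instance] Classical.propDecidable

noncomputable section


namespace NJAux

variable {V : Type*} {G : SimpleGraph V}

/-- Reachability in `G` minus one edge. -/
def R (G : SimpleGraph V) (e : Sym2 V) (i j : V) : Prop :=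
  (G.deleteEdges {e}).Reachable i j

lemma R.refl (G : SimpleGraph V) (e : Sym2 V) (i : V) : R G e i i := Reachable.refl i

lemma R.symm {e : Sym2 V} {i j : V} (h : R G e i j) : R G e j i := Reachable.symm h

lemma R.trans {e : Sym2 V} {i j k : V} (h : R G e i j) (h' : R G e j k) : R G e i k :=
  Reachable.trans h h'

lemma R_of_not_mem_edges {i j : V} (q : G.Walk i j) {e : Sym2 V} (h : e ∉ q.edges) :
    R G e i j := ⟨q.toDeleteEdge e h⟩

lemma R_adj {i j : V} {e : Sym2 V} (h : G.Adj i j) (hne : s(i, j) ≠ e) : R G e i j := by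
  refine R_of_not_mem_edges (Walk.cons h Walk.nil) ?_
  simp only [Walk.edges_cons, Walk.edges_nil, List.mem_singleton]
  exact fun hh => hne hh.symm

lemma not_R_bridge (hT : G.IsTree) {u₁ u₂ : V} (h : G.Adj u₁ u₂) :
    ¬ R G s(u₁, u₂) u₁ u₂ := by
  have hb := (isAcyclic_iff_forall_adj_isBridge.mp hT.IsAcyclic) h
  rw [isBridge_iff] at hb
  exact hb

lemma R_dichotomy (hc : G.Connected) {u₁ u₂ : V} (h : G.Adj u₁ u₂) (z : V) :
    R G s(u₁, u₂) u₁ z ∨ R G s(u₁, u₂) u₂ z := by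
  obtain ⟨q⟩ := hc.preconnected u₁ z
  have main : ∀ {z' z : V} (q : G.Walk z' z),
      (R G s(u₁, u₂) u₁ z' ∨ R G s(u₁, u₂) u₂ z') →
      (R G s(u₁, u₂) u₁ z ∨ R G s(u₁, u₂) u₂ z) := by
    intro z' z q
    induction q with
    | nil => exact id
    | @cons α β γ hadj q ih =>
      intro hz'
      by_cases he : s(α, β) = s(u₁, u₂)
      · rw [Sym2.eq_iff] at he
        rcases he with ⟨rfl, rfl⟩ | ⟨rfl, rfl⟩
        · exact ih (Or.inr (R.refl G _ _))
        · exact ih (Or.inl (R.refl G _ _))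
      · have hstep : R G s(u₁, u₂) α β := R_adj hadj he
        rcases hz' with h1 | h1
        · exact ih (Or.inl (h1.trans hstep))
        · exact ih (Or.inr (h1.trans hstep))
  exact main q (Or.inl (R.refl G _ _))

lemma R_partition (hT : G.IsTree) {u₁ u₂ i j : V} (h : G.Adj u₁ u₂)
    (hij : ¬ R G s(u₁, u₂) i j) (k : V) :
    (¬ R G s(u₁, u₂) i k ↔ R G s(u₁, u₂) j k) := by
  set e := s(u₁, u₂) with he
  have hbr := not_R_bridge hT h
  have di := R_dichotomy hT.isConnected h i
  have dj := R_dichotomy hT.isConnected h j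
  have dk := R_dichotomy hT.isConnected h k
  constructor
  · intro hik
    rcases di with hi | hi
    · have hj : R G e u₂ j := by
        rcases dj with hj | hj
        · exact absurd (hi.symm.trans hj) hij
        · exact hj
      rcases dk with hk | hk
      · exact absurd (hi.symm.trans hk) hik
      · exact hj.symm.trans hk
    · have hj : R G e u₁ j := by
        rcases dj with hj | hj
        · exact hj
        · exact absurd (hi.symm.trans hj) hij
      rcases dk with hk | hk
      · exact hj.symm.trans hk
      · exact absurd (hi.symm.trans hk) hik
  · intro hjk hik
    exact hij (hik.trans hjk.symm)

lemma mem_edges_iff_not_R (hT : G.IsTree) {i j : V} {q : G.Walk i j} (hq : q.IsPath)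
    {e : Sym2 V} (he : e ∈ G.edgeSet) : e ∈ q.edges ↔ ¬ R G e i j := by
  constructor
  · intro hmem hr
    obtain ⟨q'⟩ := hr
    have hsub : ∀ f ∈ q'.edges, f ∈ G.edgeSet := by
      intro f hf
      have := q'.edges_subset_edgeSet hf
      rw [edgeSet_deleteEdges] at this
      exact this.1
    set qt := q'.transfer G hsub with hqt
    have hqt_edges : qt.edges = q'.edges := Walk.edges_transfer q' hsub
    have hae : e ∉ qt.edges := by
      rw [hqt_edges]
      intro hf
      have := q'.edges_subset_edgeSet hf
      rw [edgeSet_deleteEdges] at this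
      exact this.2 rfl
    have hbp : qt.bypass.IsPath := Walk.bypass_isPath qt
    have huniq := hT.existsUnique_path i j
    obtain ⟨p₀, hp₀, hup⟩ := huniq
    have h1 : q = p₀ := (hup q hq).trans (hup qt.bypass hbp).symm ▸ hup q hq
    have h2 : qt.bypass = p₀ := hup qt.bypass hbp
    rw [h1, ← h2] at hmem
    exact hae (Walk.edges_bypass_subset qt hmem)
  · intro hmem
    by_contra hne
    exact hmem (R_of_not_mem_edges q hne)

lemma length_eq_dist (hT : G.IsTree) {i j : V} {q : G.Walk i j} (hq : q.IsPath) :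
    q.length = G.dist i j := by
  obtain ⟨p', hp'⟩ := (hT.isConnected.preconnected i j).exists_walk_length_eq_dist
  obtain ⟨p₀, hp₀, hup⟩ := hT.existsUnique_path i j
  have h1 : q = p₀ := hup q hq
  have h2 : p'.bypass = p₀ := hup p'.bypass (Walk.bypass_isPath p')
  have : q.length ≤ G.dist i j := by
    rw [h1, ← h2, ← hp']
    exact Walk.length_bypass_le p'
  exact le_antisymm this (SimpleGraph.dist_le q)

lemma vert_mem_support_of_mem_edges {i j v : V} (q : G.Walk i j) {e : Sym2 V}
    (he : e ∈ q.edges) (hv : v ∈ e) : v ∈ q.support := by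
  induction e with
  | _ α β =>
    rw [Sym2.mem_iff] at hv
    rcases hv with rfl | rfl
    · exact q.fst_mem_support_of_mem_edges he
    · exact q.snd_mem_support_of_mem_edges he

/-- Every vertex has degree 1 or at least 3. -/
lemma deg_dichot {X : Finset V} [Fintype V]
    (hleaf : ∀ v : V, G.degree v = 1 ↔ v ∈ X) (hint : ∀ v : V, v ∉ X → 3 ≤ G.degree v)
    (v : V) : G.degree v = 1 ∨ 3 ≤ G.degree v := by
  by_cases hv : v ∈ X
  · exact Or.inl ((hleaf v).mpr hv)
  · exact Or.inr (hint v hv)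

lemma unique_nbr [Fintype V] [DecidableEq V] {a c m : V} (ha : G.degree a = 1)
    (hac : G.Adj a c) (ham : G.Adj a m) : m = c := by
  classical
  have h1 : c ∈ G.neighborFinset a := by rwa [mem_neighborFinset]
  have h2 : m ∈ G.neighborFinset a := by rwa [mem_neighborFinset]
  obtain ⟨z, hz⟩ := Finset.card_eq_one.mp ((G.card_neighborFinset_eq_degree a).trans ha)
  rw [hz, Finset.mem_singleton] at h1 h2
  rw [h2, h1]

lemma R_leaf_eq [Fintype V] {a c z : V} (ha : G.degree a = 1) (hac : G.Adj a c)
    (h : R G s(a, c) a z) : z = a := by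
  classical
  obtain ⟨q⟩ := h
  cases q with
  | nil => rfl
  | cons hadj q' =>
    exfalso
    rw [SimpleGraph.deleteEdges_adj] at hadj
    obtain ⟨hadj, hne⟩ := hadj
    have := unique_nbr ha hac hadj
    subst this
    exact hne rfl

lemma exists_leaf_side [Fintype V] {X : Finset V} (hT : G.IsTree)
    (hleaf : ∀ v : V, G.degree v = 1 ↔ v ∈ X) (hint : ∀ v : V, v ∉ X → 3 ≤ G.degree v)
    {u₁ u₂ : V} (h : G.Adj u₁ u₂) :
    ∃ k, G.degree k = 1 ∧ ¬ R G s(u₁, u₂) u₁ k := by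
  classical
  have hbr := not_R_bridge hT h
  set T : Finset V := Finset.univ.filter (fun z => R G s(u₁, u₂) u₂ z) with hTdef
  have hTne : T.Nonempty := ⟨u₂, by simp [hTdef, R.refl]⟩
  obtain ⟨z₀, hz₀T, hmax⟩ := T.exists_max_image (fun z => G.dist u₂ z) hTne
  have hz₀ : R G s(u₁, u₂) u₂ z₀ := by
    simpa [hTdef] using hz₀T
  have hz₀u₁ : z₀ ≠ u₁ := by rintro rfl; exact hbr hz₀.symm
  rcases deg_dichot hleaf hint z₀ with hdeg | hdeg
  · exact ⟨z₀, hdeg, fun hr => hbr (hr.trans hz₀.symm)⟩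
  exfalso
  have hcard2 : 1 < (G.neighborFinset z₀).card := by
    rw [G.card_neighborFinset_eq_degree]; omega
  by_cases hz₀u₂ : z₀ = u₂
  · subst hz₀u₂
    obtain ⟨m, hm, hmu₁⟩ := Finset.exists_mem_ne hcard2 u₁
    have hadjm : G.Adj z₀ m := by rwa [mem_neighborFinset] at hm
    have hsne : s(z₀, m) ≠ s(u₁, z₀) := by
      intro heq
      rw [Sym2.eq_iff] at heq
      rcases heq with ⟨h1, h2⟩ | ⟨h1, h2⟩
      · exact hz₀u₁ h1
      · exact hmu₁ h2
    have hRm : R G s(u₁, z₀) z₀ m := R_adj hadjm hsne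
    have hmT : m ∈ T := by simp [hTdef, hRm]
    have hd := hmax m hmT
    simp only [SimpleGraph.dist_self] at hd
    have : G.dist z₀ m = 0 := Nat.le_zero.mp hd
    exact hadjm.ne ((hT.isConnected.dist_eq_zero_iff).mp this)
  · obtain ⟨q, hq, -⟩ := hT.existsUnique_path u₂ z₀
    have heE : s(u₁, u₂) ∈ G.edgeSet := h
    have heq : s(u₁, u₂) ∉ q.edges := by
      rw [mem_edges_iff_not_R hT hq heE]
      exact fun hh => hh hz₀
    have hlen : q.length = G.dist u₂ z₀ := length_eq_dist hT hq
    rcases hrev : q.reverse with _ | @⟨_, pen, _, hpen, r⟩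
    · exact hz₀u₂ rfl
    · obtain ⟨m, hm, hmpen⟩ := Finset.exists_mem_ne hcard2 pen
      have hadjm : G.Adj z₀ m := by rwa [mem_neighborFinset] at hm
      have hsne : s(z₀, m) ≠ s(u₁, u₂) := by
        intro hcontra
        rw [Sym2.eq_iff] at hcontra
        rcases hcontra with ⟨h1, h2⟩ | ⟨h1, h2⟩
        · exact hz₀u₁ h1
        · exact hz₀u₂ h1
      have hRm : R G s(u₁, u₂) u₂ m := hz₀.trans (R_adj hadjm hsne)
      have hmsupp : m ∉ q.support := by
        intro hmem
        have hdroppath := hq.dropUntil hmem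
        have hsingle : (Walk.cons hadjm.symm Walk.nil : G.Walk m z₀).IsPath := by
          rw [Walk.cons_isPath_iff]
          exact ⟨Walk.IsPath.nil, by simp [hadjm.ne']⟩
        obtain ⟨p₀, -, hup⟩ := hT.existsUnique_path m z₀
        have hdu : q.dropUntil m hmem = Walk.cons hadjm.symm Walk.nil :=
          (hup _ hdroppath).trans (hup _ hsingle).symm
        have hspec := q.take_spec hmem
        have hqrev : q.reverse
            = Walk.cons hadjm ((q.takeUntil m hmem).reverse) := by
          conv_lhs => rw [← hspec]
          rw [Walk.reverse_append, hdu, Walk.reverse_cons, Walk.reverse_nil,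
            Walk.nil_append, Walk.cons_append, Walk.nil_append]
        have h1 : q.reverse.getVert 1 = pen := by
          rw [hrev, Walk.getVert_cons_succ, Walk.getVert_zero]
        have h2 : q.reverse.getVert 1 = m := by
          rw [hqrev, Walk.getVert_cons_succ, Walk.getVert_zero]
        exact hmpen (h2 ▸ h1)
      have hpm : (Walk.cons hadjm.symm q.reverse).IsPath := by
        rw [Walk.cons_isPath_iff]
        refine ⟨hq.reverse, ?_⟩
        rw [Walk.support_reverse, List.mem_reverse]
        exact hmsupp
      have hpmlen : (Walk.cons hadjm.symm q.reverse).reverse.length = q.length + 1 := by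
        simp [Walk.length_reverse]
      have hdm : G.dist u₂ m = q.length + 1 := by
        rw [← hpmlen]
        exact (length_eq_dist hT hpm.reverse).symm
      have hmT : m ∈ T := by simp [hTdef, hRm]
      have := hmax m hmT
      rw [hdm, hlen] at this
      omega

variable [Fintype V]

/-- number of leaves on the far side of `e` from `i`. -/
def cnt (G : SimpleGraph V) (X : Finset V) (e : Sym2 V) (i : V) : ℕ :=
  (X.filter fun k => ¬ R G e i k).card

def gcoef (G : SimpleGraph V) (X : Finset V) (e : Sym2 V) (i j : V) : ℝ :=
  if R G e i j then (cnt G X e i : ℝ) else 1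

def S (G : SimpleGraph V) (X : Finset V) (w : Sym2 V → ℝ) (i j : V) : ℝ :=
  ∑ e ∈ G.edgeFinset, w e * gcoef G X e i j

lemma cnt_congr {X : Finset V} {e : Sym2 V} {i j : V} (h : R G e i j) :
    cnt G X e i = cnt G X e j := by
  unfold cnt
  congr 1
  apply Finset.filter_congr
  intro k _
  constructor
  · intro hik hjk
    exact hik (h.trans hjk)
  · intro hjk hik
    exact hjk (h.symm.trans hik)

lemma cnt_partition (hT : G.IsTree) {X : Finset V} {e : Sym2 V} (he : e ∈ G.edgeSet)
    {i j : V} (hij : ¬ R G e i j) : cnt G X e i + cnt G X e j = X.card := by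
  induction e with
  | _ u₁ u₂ =>
    have hadj : G.Adj u₁ u₂ := (G.mem_edgeSet).mp he
    have hji : ¬ R G s(u₁, u₂) j i := fun hr => hij hr.symm
    have hiff2 := R_partition hT hadj hji
    have hcntj : cnt G (X := X) s(u₁, u₂) j = (X.filter fun k => R G s(u₁, u₂) i k).card := by
      unfold cnt
      congr 1
      apply Finset.filter_congr
      intro k _
      exact hiff2 k
    rw [hcntj]
    unfold cnt
    rw [add_comm]
    exact Finset.card_filter_add_card_filter_not (p := fun k => R G s(u₁, u₂) i k)

lemma D_eq_sum (hT : G.IsTree) {w : Sym2 V → ℝ} {D : V → V → ℝ}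
    (hD : ∀ a b : V, ∀ p : G.Walk a b, p.IsPath → D a b = (p.edges.map w).sum) (i j : V) :
    D i j = ∑ e ∈ G.edgeFinset, (if ¬ R G e i j then w e else 0) := by
  obtain ⟨q, hq, -⟩ := hT.existsUnique_path i j
  rw [hD i j q hq]
  have hnodup : q.edges.Nodup := hq.isTrail.edges_nodup
  rw [← List.sum_toFinset w hnodup]
  have hsub : q.edges.toFinset ⊆ G.edgeFinset := by
    intro e hf
    rw [mem_edgeFinset]
    exact q.edges_subset_edgeSet (List.mem_toFinset.mp hf)
  rw [← Finset.sum_subset hsub (fun e hin hnot => ?_)]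
  · apply Finset.sum_congr rfl
    intro e hf
    have hmem : e ∈ q.edges := List.mem_toFinset.mp hf
    have heE : e ∈ G.edgeSet := q.edges_subset_edgeSet hmem
    rw [if_pos ((mem_edges_iff_not_R hT hq heE).mp hmem)]
  · have hmem : e ∉ q.edges := fun hc => hnot (List.mem_toFinset.mpr hc)
    rw [if_neg]
    intro hr
    exact hr (R_of_not_mem_edges q hmem)

lemma Q_eq (hT : G.IsTree) {X : Finset V} {w : Sym2 V → ℝ} {D : V → V → ℝ}
    (hD : ∀ a b : V, ∀ p : G.Walk a b, p.IsPath → D a b = (p.edges.map w).sum)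
    {Q : V → V → ℝ}
    (hQ : ∀ i j : V, Q i j = (X.card - 2 : ℝ) * D i j
        - ∑ k ∈ X.erase i, D i k - ∑ k ∈ X.erase j, D j k) (i j : V) :
    Q i j = -2 * S G X w i j := by
  have hsum : ∀ i : V, ∑ k ∈ X.erase i, D i k
      = ∑ e ∈ G.edgeFinset, w e * (cnt G X e i : ℝ) := by
    intro i
    have h1 : ∀ k, D i k = ∑ e ∈ G.edgeFinset, (if ¬ R G e i k then w e else 0) :=
      D_eq_sum hT hD i
    calc ∑ k ∈ X.erase i, D i k
        = ∑ k ∈ X.erase i, ∑ e ∈ G.edgeFinset, (if ¬ R G e i k then w e else 0) := by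
          exact Finset.sum_congr rfl fun k _ => h1 k
      _ = ∑ e ∈ G.edgeFinset, ∑ k ∈ X.erase i, (if ¬ R G e i k then w e else 0) :=
          Finset.sum_comm
      _ = ∑ e ∈ G.edgeFinset, w e * (cnt G X e i : ℝ) := by
          apply Finset.sum_congr rfl
          intro e _
          rw [← Finset.sum_filter]
          rw [Finset.sum_const]
          have hfe : (X.erase i).filter (fun k => ¬ R G e i k)
              = X.filter (fun k => ¬ R G e i k) := by
            ext k
            simp only [Finset.mem_filter, Finset.mem_erase]
            constructor
            · rintro ⟨⟨hki, hkX⟩, hk⟩; exact ⟨hkX, hk⟩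
            · rintro ⟨hkX, hk⟩
              refine ⟨⟨?_, hkX⟩, hk⟩
              intro heq
              apply hk
              rw [heq]
              exact R.refl G e i
          rw [hfe]
          unfold cnt
          rw [nsmul_eq_mul, mul_comm]
  rw [hQ, hsum i, hsum j, D_eq_sum hT hD i j]
  unfold S
  rw [Finset.mul_sum, ← Finset.sum_sub_distrib, ← Finset.sum_sub_distrib, Finset.mul_sum]
  apply Finset.sum_congr rfl
  intro e heF
  have heE : e ∈ G.edgeSet := mem_edgeFinset.mp heF
  by_cases hR : R G e i j
  · rw [if_neg (fun hc => hc hR)]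
    rw [gcoef, if_pos hR, cnt_congr (X := X) hR]
    ring
  · rw [if_pos hR, gcoef, if_neg hR]
    have hpart := cnt_partition hT (X := X) heE hR
    have hcc : (cnt G X e i : ℝ) + (cnt G X e j : ℝ) = (X.card : ℝ) := by exact_mod_cast hpart
    rw [← hcc]
    ring

lemma D_symm (hT : G.IsTree) {w : Sym2 V → ℝ} {D : V → V → ℝ}
    (hD : ∀ a b : V, ∀ p : G.Walk a b, p.IsPath → D a b = (p.edges.map w).sum) (i j : V) :
    D i j = D j i := by
  obtain ⟨q, hq, -⟩ := hT.existsUnique_path i j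
  rw [hD i j q hq, hD j i q.reverse hq.reverse, Walk.edges_reverse, List.map_reverse,
    List.sum_reverse]

/-- The big per-edge comparison: a cherry `(a, b, c)` all of whose "separating" edges
cut off at most half of the leaves beats the non-cherry pair `(x, y)`. -/
lemma compare (hT : G.IsTree) {X : Finset V}
    (hleaf : ∀ v : V, G.degree v = 1 ↔ v ∈ X)
    {w : Sym2 V → ℝ} (hw : ∀ e ∈ G.edgeSet, 0 < w e)
    {D : V → V → ℝ}
    (hD : ∀ a b : V, ∀ p : G.Walk a b, p.IsPath → D a b = (p.edges.map w).sum)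
    {Q : V → V → ℝ}
    (hQ : ∀ i j : V, Q i j = (X.card - 2 : ℝ) * D i j
        - ∑ k ∈ X.erase i, D i k - ∑ k ∈ X.erase j, D j k)
    {x y : V} (hx : x ∈ X) (hy : y ∈ X) (hxyne : x ≠ y)
    (hmin : ∀ i ∈ X, ∀ j ∈ X, i ≠ j → Q x y ≤ Q i j)
    {a b c : V} (ha : G.degree a = 1) (hb : G.degree b = 1) (hab : a ≠ b)
    (hac : G.Adj a c) (hbc : G.Adj b c)
    (hC1 : ∀ e ∈ G.edgeFinset, R G e x y → ¬ R G e x a → 2 * cnt G X e x ≤ X.card)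
    {e₀ : Sym2 V} (he₀ : e₀ ∈ G.edgeFinset)
    (h₀xy : ¬ R G e₀ x y) (h₀ab : R G e₀ a b) (h₀cnt : 2 ≤ cnt G X e₀ a) : False := by
  have hle : ∀ e ∈ G.edgeFinset, gcoef G X e x y ≤ gcoef G X e a b := by
    intro e heF
    have heE : e ∈ G.edgeSet := mem_edgeFinset.mp heF
    by_cases hRab : R G e a b
    · simp only [gcoef]
      rw [if_pos hRab]
      by_cases hRxy : R G e x y
      · rw [if_pos hRxy]
        by_cases hxa : R G e x a
        · exact le_of_eq (by rw [cnt_congr (X := X) hxa])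
        · have hpart := cnt_partition hT (X := X) heE hxa
          have hc1 := hC1 e heF hRxy hxa
          have : cnt G X e x ≤ cnt G X e a := by omega
          exact_mod_cast this
      · rw [if_neg hRxy]
        have hwit : ∃ k ∈ X, ¬ R G e a k := by
          by_cases hax : R G e a x
          · exact ⟨y, hy, fun hay => hRxy (hax.symm.trans hay)⟩
          · exact ⟨x, hx, hax⟩
        obtain ⟨k, hkX, hk⟩ := hwit
        have : 0 < cnt G X e a :=
          Finset.card_pos.mpr ⟨k, Finset.mem_filter.mpr ⟨hkX, hk⟩⟩
        exact_mod_cast this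
    · have hpab : (Walk.cons hac (Walk.cons hbc.symm Walk.nil)).IsPath := by
        rw [Walk.cons_isPath_iff, Walk.cons_isPath_iff]
        refine ⟨⟨Walk.IsPath.nil, by simp [hbc.ne']⟩, ?_⟩
        simp only [Walk.support_cons, Walk.support_nil, List.mem_cons, List.not_mem_nil,
          or_false, List.mem_singleton]
        push_neg
        exact ⟨hac.ne, hab⟩
      have hmem : e ∈ (Walk.cons hac (Walk.cons hbc.symm Walk.nil)).edges :=
        (mem_edges_iff_not_R hT hpab heE).mpr hRab
      simp only [Walk.edges_cons, Walk.edges_nil, List.mem_cons, List.not_mem_nil,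
        or_false] at hmem
      have hone : gcoef G X e x y ≤ 1 := by
        rcases hmem with rfl | rfl
        · by_cases hRxy : R G s(a, c) x y
          · have hiso : ∀ z, R G s(a, c) a z → z = a := fun z hz => R_leaf_eq ha hac hz
            have hxa : x ≠ a := by
              rintro rfl
              exact hxyne (hiso y hRxy).symm
            have hfil : X.filter (fun k => ¬ R G s(a, c) x k) = {a} := by
              ext k
              simp only [Finset.mem_filter, Finset.mem_singleton]
              constructor
              · rintro ⟨hkX, hk⟩
                rcases R_dichotomy hT.isConnected hac k with h1 | h1
                · exact hiso k h1
                · exfalso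
                  have hcx : R G s(a, c) c x := by
                    rcases R_dichotomy hT.isConnected hac x with h2 | h2
                    · exact absurd (hiso x h2) hxa
                    · exact h2
                  exact hk (hcx.symm.trans h1)
              · intro hk
                have hkX : k ∈ X := by rw [hk]; exact (hleaf a).mp ha
                refine ⟨hkX, fun hr => ?_⟩
                rw [hk] at hr
                exact hxa (hiso x hr.symm)
            simp only [gcoef, cnt]
            rw [if_pos hRxy, hfil]
            simp
          · simp only [gcoef]
            rw [if_neg hRxy]
        · rw [Sym2.eq_swap]
          by_cases hRxy : R G s(b, c) x y
          · have hiso : ∀ z, R G s(b, c) b z → z = b := fun z hz => R_leaf_eq hb hbc hz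
            have hxb : x ≠ b := by
              rintro rfl
              exact hxyne (hiso y hRxy).symm
            have hfil : X.filter (fun k => ¬ R G s(b, c) x k) = {b} := by
              ext k
              simp only [Finset.mem_filter, Finset.mem_singleton]
              constructor
              · rintro ⟨hkX, hk⟩
                rcases R_dichotomy hT.isConnected hbc k with h1 | h1
                · exact hiso k h1
                · exfalso
                  have hcx : R G s(b, c) c x := by
                    rcases R_dichotomy hT.isConnected hbc x with h2 | h2
                    · exact absurd (hiso x h2) hxb
                    · exact h2
                  exact hk (hcx.symm.trans h1)
              · intro hk
                have hkX : k ∈ X := by rw [hk]; exact (hleaf b).mp hb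
                refine ⟨hkX, fun hr => ?_⟩
                rw [hk] at hr
                exact hxb (hiso x hr.symm)
            simp only [gcoef, cnt]
            rw [if_pos hRxy, hfil]
            simp
          · simp only [gcoef]
            rw [if_neg hRxy]
      have h2 : gcoef G X e a b = 1 := by
        simp only [gcoef]
        rw [if_neg hRab]
      rw [h2]
      exact hone
  have hstrict : S G X w x y < S G X w a b := by
    apply Finset.sum_lt_sum
    · intro e heF
      exact mul_le_mul_of_nonneg_left (hle e heF) (le_of_lt (hw e (mem_edgeFinset.mp heF)))
    · refine ⟨e₀, he₀, ?_⟩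
      apply mul_lt_mul_of_pos_left _ (hw e₀ (mem_edgeFinset.mp he₀))
      simp only [gcoef]
      rw [if_neg h₀xy, if_pos h₀ab]
      have : (2 : ℝ) ≤ (cnt G X e₀ a : ℝ) := by exact_mod_cast h₀cnt
      linarith
  have haX : a ∈ X := (hleaf a).mp ha
  have hbX : b ∈ X := (hleaf b).mp hb
  have h1 := hmin a haX b hbX hab
  rw [Q_eq hT hD hQ x y, Q_eq hT hD hQ a b] at h1
  linarith

lemma side_subset (hT : G.IsTree) {x y a u u' : V} (hadj : G.Adj u u')
    (hxa : R G s(u, u') x a) (hxy : ¬ R G s(u, u') x y)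
    {e : Sym2 V} (he : e ∈ G.edgeSet) (hexy : R G e x y) (hexa : ¬ R G e x a) :
    ∀ k, ¬ R G e x k → R G s(u, u') x k := by
  intro k hek
  by_contra hk
  obtain ⟨q, hq, -⟩ := hT.existsUnique_path x a
  have he₁q : s(u, u') ∉ q.edges := by
    rw [mem_edges_iff_not_R hT hq ((G.mem_edgeSet).mpr hadj)]
    exact fun h => h hxa
  have hsupp : ∀ m ∈ q.support, R G s(u, u') x m := fun m hm =>
    R_of_not_mem_edges (q.takeUntil m hm)
      (fun hc => he₁q (q.edges_takeUntil_subset hm hc))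
  have heq : e ∈ q.edges := (mem_edges_iff_not_R hT hq he).mpr hexa
  obtain ⟨qk, hqk, -⟩ := hT.existsUnique_path k y
  have hky : R G s(u, u') k y := ((R_partition hT hadj hxy k).mp hk).symm
  have he₁k : s(u, u') ∉ qk.edges := by
    rw [mem_edges_iff_not_R hT hqk ((G.mem_edgeSet).mpr hadj)]
    exact fun h => h hky
  have hsuppk : ∀ m ∈ qk.support, R G s(u, u') k m := fun m hm =>
    R_of_not_mem_edges (qk.takeUntil m hm)
      (fun hc => he₁k (qk.edges_takeUntil_subset hm hc))
  have hek' : e ∉ qk.edges := by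
    intro hc
    have hv : (Sym2.Mem.other (Sym2.out_fst_mem e)) ∈ e := Sym2.other_mem _
    have h1 := hsupp _ (vert_mem_support_of_mem_edges q heq hv)
    have h2 := hsuppk _ (vert_mem_support_of_mem_edges qk hc hv)
    exact hk (h1.trans h2.symm)
  exact hek (hexy.trans (R_of_not_mem_edges qk hek').symm)

lemma key (hT : G.IsTree) {X : Finset V}
    (hleaf : ∀ v : V, G.degree v = 1 ↔ v ∈ X) (hint : ∀ v : V, v ∉ X → 3 ≤ G.degree v)
    {w : Sym2 V → ℝ} (hw : ∀ e ∈ G.edgeSet, 0 < w e)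
    {D : V → V → ℝ}
    (hD : ∀ a b : V, ∀ p : G.Walk a b, p.IsPath → D a b = (p.edges.map w).sum)
    {Q : V → V → ℝ}
    (hQ : ∀ i j : V, Q i j = (X.card - 2 : ℝ) * D i j
        - ∑ k ∈ X.erase i, D i k - ∑ k ∈ X.erase j, D j k)
    {x y : V} (hx : x ∈ X) (hy : y ∈ X) (hxyne : x ≠ y)
    (hmin : ∀ i ∈ X, ∀ j ∈ X, i ≠ j → Q x y ≤ Q i j)
    {u u' : V} (h1 : G.Adj x u) (h2 : G.Adj u u') (p₂ : G.Walk u' y)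
    (hp : (Walk.cons h1 (Walk.cons h2 p₂)).IsPath)
    (hu'y : u' ≠ y)
    (hsmall : 2 * (X.filter (fun k => R G s(u, u') x k)).card ≤ X.card) : False := by
  classical
  have hE₁ : s(u, u') ∈ G.edgeSet := (G.mem_edgeSet).mpr h2
  set p : G.Walk x y := Walk.cons h1 (Walk.cons h2 p₂) with hpdef
  have hpe : p.edges = s(x, u) :: s(u, u') :: p₂.edges := by simp [hpdef]
  have hnodupE : p.edges.Nodup := hp.isTrail.edges_nodup
  have he₁p₂ : s(u, u') ∉ p₂.edges := by
    rw [hpe] at hnodupE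
    exact (List.nodup_cons.mp (List.nodup_cons.mp hnodupE).2).1
  have hRu'y : R G s(u, u') u' y := R_of_not_mem_edges p₂ he₁p₂
  have hnRxy : ¬ R G s(u, u') x y := by
    rw [← mem_edges_iff_not_R hT hp hE₁]
    rw [hpe]; simp
  have hnRxu' : ¬ R G s(u, u') x u' := fun h => hnRxy (h.trans hRu'y)
  have hxu' : x ≠ u' := fun heq => hnRxu' (heq ▸ R.refl G s(u, u') x)
  have hsuppP₂ : ∀ m ∈ p₂.support, ¬ R G s(u, u') x m := by
    intro m hm hxm
    have hum : R G s(u, u') u' m := R_of_not_mem_edges (p₂.takeUntil m hm)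
      (fun hc => he₁p₂ (p₂.edges_takeUntil_subset hm hc))
    exact hnRxu' (hxm.trans hum.symm)
  -- u has a third neighbor d₀
  have hudeg : 3 ≤ G.degree u := by
    rcases deg_dichot hleaf hint u with hdeg | hdeg
    · exact absurd (unique_nbr hdeg h2 h1.symm) (fun hh => hxu' hh)
    · exact hdeg
  -- generic: pick a neighbor outside two given vertices
  have hpick : ∀ (v₁ e₁ e₂ : V), 3 ≤ G.degree v₁ →
      ∃ d, G.Adj v₁ d ∧ d ≠ e₁ ∧ d ≠ e₂ := by
    intro v₁ e₁ e₂ hdeg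
    by_contra hcon
    push_neg at hcon
    have hsub : G.neighborFinset v₁ ⊆ {e₁, e₂} := by
      intro m hm
      have hadjm : G.Adj v₁ m := by rwa [mem_neighborFinset] at hm
      by_cases hme : m = e₁
      · simp [hme]
      · simp [hcon m hadjm hme]
    have hle := Finset.card_le_card hsub
    rw [G.card_neighborFinset_eq_degree] at hle
    have : ({e₁, e₂} : Finset V).card ≤ 2 := Finset.card_insert_le _ _ |>.trans (by simp)
    omega
  obtain ⟨d₀, hd₀adj, hd₀x, hd₀u'⟩ := hpick u x u' hudeg
  -- a leaf z₀ on the x-side of e₁, different from x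
  obtain ⟨z₀, hz₀deg, hz₀side⟩ := exists_leaf_side (X := X) hT hleaf hint hd₀adj
  have hRf₀xu : R G s(u, d₀) x u := R_adj h1 (by
    intro heq; rw [Sym2.eq_iff] at heq
    rcases heq with ⟨ha', hb'⟩ | ⟨ha', hb'⟩
    · exact h1.ne ha'
    · exact hd₀x ha'.symm)
  have hz₀x : z₀ ≠ x := fun heq => hz₀side (heq ▸ hRf₀xu.symm)
  have hz₀A : R G s(u, u') x z₀ := by
    by_contra hcon
    obtain ⟨qz, hqz, -⟩ := hT.existsUnique_path x z₀
    have hm1 : s(u, u') ∈ qz.edges := (mem_edges_iff_not_R hT hqz hE₁).mpr hcon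
    have hm2 : s(u, d₀) ∈ qz.edges := by
      refine (mem_edges_iff_not_R hT hqz ((G.mem_edgeSet).mpr hd₀adj)).mpr ?_
      exact fun h => hz₀side (hRf₀xu.symm.trans h)
    -- qz starts with the pendant edge of x, then a single edge at u
    revert hm1 hm2
    have hxdeg : G.degree x = 1 := (hleaf x).mpr hx
    rcases qz with _ | @⟨_, m, _, hxm, q'⟩
    · exact absurd rfl hz₀x.symm
    · have hmu : u = m := (unique_nbr hxdeg h1 hxm).symm
      subst hmu
      intro hm1 hm2
      simp only [Walk.edges_cons, List.mem_cons] at hm1 hm2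
      have hne1 : s(u, u') ≠ s(x, u) := by
        intro heq; rw [Sym2.eq_iff] at heq
        rcases heq with ⟨ha', hb'⟩ | ⟨ha', hb'⟩
        · exact h1.ne ha'.symm
        · exact hxu' hb'.symm
      have hne2 : s(u, d₀) ≠ s(x, u) := by
        intro heq; rw [Sym2.eq_iff] at heq
        rcases heq with ⟨ha', hb'⟩ | ⟨ha', hb'⟩
        · exact h1.ne ha'.symm
        · exact hd₀x hb'
      have hm1' : s(u, u') ∈ q'.edges := hm1.resolve_left hne1
      have hm2' : s(u, d₀) ∈ q'.edges := hm2.resolve_left hne2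
      have hq' : q'.IsPath := hqz.of_cons
      revert hm1' hm2'
      rcases q' with _ | @⟨_, m', _, hum', q''⟩
      · intro hm1' _; simp at hm1'
      · intro hm1' hm2'
        simp only [Walk.edges_cons, List.mem_cons] at hm1' hm2'
        have husupp : u ∉ q''.support := by
          have := (Walk.cons_isPath_iff _ _).mp hq'
          exact this.2
        have h1'' : s(u, u') = s(u, m') := by
          rcases hm1' with h | h
          · exact h
          · exact absurd (vert_mem_support_of_mem_edges q'' h (by simp)) husupp
        have h2'' : s(u, d₀) = s(u, m') := by
          rcases hm2' with h | h
          · exact h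
          · exact absurd (vert_mem_support_of_mem_edges q'' h (by simp)) husupp
        rw [Sym2.congr_right] at h1'' h2''
        exact hd₀u' (h2''.trans h1''.symm)
  -- the farthest leaf `a` on the x-side
  set F : Finset V := (X.filter (fun k => R G s(u, u') x k)).erase x with hFdef
  have hz₀X : z₀ ∈ X := (hleaf z₀).mp hz₀deg
  have hz₀F : z₀ ∈ F := by
    rw [hFdef, Finset.mem_erase, Finset.mem_filter]
    exact ⟨hz₀x, hz₀X, hz₀A⟩
  obtain ⟨a, haF, hamax⟩ := F.exists_max_image (fun k => G.dist x k) ⟨z₀, hz₀F⟩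
  rw [hFdef, Finset.mem_erase, Finset.mem_filter] at haF
  obtain ⟨hax, haX, hRxa⟩ := haF
  have hadeg : G.degree a = 1 := (hleaf a).mpr haX
  have hay : a ≠ y := fun heq => hnRxy (heq ▸ hRxa)
  -- the unique neighbor c of a
  obtain ⟨c, hcs⟩ := Finset.card_eq_one.mp ((G.card_neighborFinset_eq_degree a).trans hadeg)
  have hac : G.Adj a c := by
    have : c ∈ G.neighborFinset a := by rw [hcs]; exact Finset.mem_singleton_self c
    rwa [mem_neighborFinset] at this
  -- the path from x to a, decomposed at its last edge
  obtain ⟨qa, hqa, -⟩ := hT.existsUnique_path x a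
  have hdec : ∃ (r : G.Walk c x), qa.reverse = Walk.cons hac r := by
    generalize hgen : qa.reverse = qr
    rcases qr with _ | @⟨_, m, _, ham, r⟩
    · exact absurd rfl hax
    · have hmc : c = m := (unique_nbr hadeg hac ham).symm
      subst hmc
      exact ⟨r, rfl⟩
  obtain ⟨r, hrev⟩ := hdec
  have hqa_eq : qa = (Walk.cons hac r).reverse := by
    rw [← hrev, Walk.reverse_reverse]
  set qc : G.Walk x c := r.reverse with hqcdef
  have hqarev : qa = qc.append (Walk.cons hac.symm Walk.nil) := by
    rw [hqa_eq, Walk.reverse_cons, hqcdef]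
  have hqc : qc.IsPath := by
    have h' : (Walk.cons hac r).IsPath := by rw [← hrev]; exact hqa.reverse
    exact ((Walk.cons_isPath_iff _ _).mp h').1.reverse
  have hqa_edges : qa.edges = qc.edges ++ [s(c, a)] := by
    rw [hqarev, Walk.edges_append]
    simp [Sym2.eq_swap]
  have he₁qa : s(u, u') ∉ qa.edges := by
    rw [mem_edges_iff_not_R hT hqa hE₁]
    exact fun h => h hRxa
  have hRxc : R G s(u, u') x c := by
    apply R_of_not_mem_edges qc
    intro hcc
    exact he₁qa (by rw [hqa_edges]; exact List.mem_append_left _ hcc)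
  have ha_supp : a ∉ qc.support := by
    have hnd : qa.support.Nodup := hqa.support_nodup
    rw [hqarev, Walk.support_append] at hnd
    simp only [Walk.support_cons, Walk.support_nil, List.tail_cons] at hnd
    have := List.disjoint_of_nodup_append hnd
    intro hmem
    exact this hmem (by simp)
  have hcx : c ≠ x := by
    intro heq
    have h' : G.Adj x a := by rw [← heq]; exact hac.symm
    have : a = u := unique_nbr ((hleaf x).mpr hx) h1 h'
    rw [this] at hadeg
    omega
  -- leaf z₃ on the far side of e₁, beyond u', distinct from y
  obtain ⟨z₁, h₃, p₃, hexp⟩ : ∃ z₁ : V, ∃ h₃ : G.Adj u' z₁, ∃ p₃ : G.Walk z₁ y,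
      p₂ = Walk.cons h₃ p₃ := by
    cases p₂ with
    | nil => exact absurd rfl hu'y
    | cons h q => exact ⟨_, h, q, rfl⟩
  have hz₁u : z₁ ≠ u := by
    have hnd : p.support.Nodup := hp.support_nodup
    have : p.support = x :: u :: p₂.support := by simp [hpdef]
    rw [this] at hnd
    have hu : u ∉ p₂.support := by
      have := (List.nodup_cons.mp hnd).2
      exact (List.nodup_cons.mp this).1
    intro heq
    apply hu
    rw [hexp]
    subst heq
    simp [Walk.support_cons]
  have hu'deg : 3 ≤ G.degree u' := by
    rcases deg_dichot hleaf hint u' with hdeg | hdeg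
    · exact absurd (unique_nbr hdeg h₃ h2.symm) (fun hh => hz₁u hh.symm)
    · exact hdeg
  obtain ⟨d₃, hd₃adj, hd₃u, hd₃z₁⟩ := hpick u' u z₁ hu'deg
  obtain ⟨z₃, hz₃deg, hz₃side⟩ := exists_leaf_side (X := X) hT hleaf hint hd₃adj
  have hRf₃xu' : R G s(u', d₃) x u' := by
    apply R_of_not_mem_edges (Walk.cons h1 (Walk.cons h2 Walk.nil))
    simp only [Walk.edges_cons, Walk.edges_nil, List.mem_cons, List.not_mem_nil, or_false]
    rintro (heq | heq)
    · rw [Sym2.eq_iff] at heq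
      rcases heq with ⟨ha', hb'⟩ | ⟨ha', hb'⟩
      · exact hxu' ha'.symm
      · exact h2.ne' ha'
    · rw [Sym2.eq_iff] at heq
      rcases heq with ⟨ha', hb'⟩ | ⟨ha', hb'⟩
      · exact h2.ne' ha'
      · exact hd₃u hb'
  have hRf₃u'y : R G s(u', d₃) u' y := by
    apply R_of_not_mem_edges p₂
    rw [hexp]
    simp only [Walk.edges_cons, List.mem_cons]
    rintro (heq | hmem)
    · rw [Sym2.congr_right] at heq
      exact hd₃z₁ heq
    · have hu'p₃ : u' ∉ p₃.support := by
        have hp₂path : p₂.IsPath := (hp.of_cons).of_cons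
        rw [hexp] at hp₂path
        exact ((Walk.cons_isPath_iff _ _).mp hp₂path).2
      exact hu'p₃ (vert_mem_support_of_mem_edges p₃ hmem (by simp))
  have hz₃y : z₃ ≠ y := fun heq => hz₃side (heq ▸ hRf₃u'y)
  have hz₃A : ¬ R G s(u, u') x z₃ := by
    intro hcon
    have hf₃xz₃ : ¬ R G s(u', d₃) x z₃ := fun h => hz₃side (hRf₃xu'.symm.trans h)
    obtain ⟨qz, hqz, -⟩ := hT.existsUnique_path x z₃
    have hf₃mem : s(u', d₃) ∈ qz.edges :=
      (mem_edges_iff_not_R hT hqz ((G.mem_edgeSet).mpr hd₃adj)).mpr hf₃xz₃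
    have hu'supp : u' ∈ qz.support := vert_mem_support_of_mem_edges qz hf₃mem (by simp)
    have htu : (qz.takeUntil u' hu'supp).IsPath := hqz.takeUntil hu'supp
    have he₁tu : s(u, u') ∈ (qz.takeUntil u' hu'supp).edges :=
      (mem_edges_iff_not_R hT htu hE₁).mpr hnRxu'
    have : s(u, u') ∈ qz.edges := qz.edges_takeUntil_subset hu'supp he₁tu
    exact ((mem_edges_iff_not_R hT hqz hE₁).mp this) hcon
  have h₀cnt : 2 ≤ cnt G X s(u, u') a := by
    have h1' : ¬ R G s(u, u') a y := fun h => hnRxy (hRxa.trans h)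
    have h2' : ¬ R G s(u, u') a z₃ := fun h => hz₃A (hRxa.trans h)
    have hz₃X : z₃ ∈ X := (hleaf z₃).mp hz₃deg
    have hsub : ({y, z₃} : Finset V) ⊆ X.filter (fun k => ¬ R G s(u, u') a k) := by
      intro k hk
      rw [Finset.mem_insert, Finset.mem_singleton] at hk
      rcases hk with rfl | rfl
      · exact Finset.mem_filter.mpr ⟨hy, h1'⟩
      · exact Finset.mem_filter.mpr ⟨hz₃X, h2'⟩
    have hcard : ({y, z₃} : Finset V).card = 2 := by
      rw [Finset.card_insert_of_notMem (by simp [hz₃y.symm]), Finset.card_singleton]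
    calc 2 = ({y, z₃} : Finset V).card := hcard.symm
      _ ≤ _ := Finset.card_le_card hsub
  -- the C1 condition
  have hC1 : ∀ e ∈ G.edgeFinset, R G e x y → ¬ R G e x a → 2 * cnt G X e x ≤ X.card := by
    intro e heF hexy hexa
    have hsub := side_subset hT h2 hRxa hnRxy (mem_edgeFinset.mp heF) hexy hexa
    have hss : X.filter (fun k => ¬ R G e x k) ⊆ X.filter (fun k => R G s(u, u') x k) := by
      intro k hk
      rw [Finset.mem_filter] at hk ⊢
      exact ⟨hk.1, hsub k hk.2⟩
    have := Finset.card_le_card hss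
    unfold cnt
    omega
  have he₀F : s(u, u') ∈ G.edgeFinset := mem_edgeFinset.mpr hE₁
  -- case split on whether c = u
  by_cases hcu : c = u
  · subst hcu
    exact compare hT hleaf hw hD hQ hx hy hxyne hmin hadeg ((hleaf x).mpr hx)
      hax hac h1 hC1 he₀F hnRxy hRxa.symm h₀cnt
  · -- c is off the path; find a leaf b ≠ a adjacent to c
    have hcsupp : c ∉ p.support := by
      have hps : p.support = x :: u :: p₂.support := by simp [hpdef]
      rw [hps]
      simp only [List.mem_cons, not_or]
      exact ⟨hcx, hcu, fun hmem => hsuppP₂ c hmem hRxc⟩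
    -- penultimate vertex m₀ of the path x → c
    have hdec₀ : ∃ m₀ : V, ∃ hm₀ : G.Adj c m₀, ∃ r₀ : G.Walk m₀ x,
        qc.reverse = Walk.cons hm₀ r₀ := by
      generalize hgen : qc.reverse = qr
      rcases qr with _ | @⟨_, m₀, _, hcm₀, r₀⟩
      · exact absurd rfl hcx
      · exact ⟨m₀, hcm₀, r₀, rfl⟩
    obtain ⟨m₀, hm₀, r₀, hrev₀⟩ := hdec₀
    have hm₀supp : m₀ ∈ qc.support := by
      have : m₀ ∈ qc.reverse.support := by
        rw [hrev₀]
        simp [Walk.support_cons]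
      rwa [Walk.support_reverse, List.mem_reverse] at this
    have hm₀a : m₀ ≠ a := fun heq => ha_supp (heq ▸ hm₀supp)
    have hcdeg : 3 ≤ G.degree c := by
      rcases deg_dichot hleaf hint c with hdeg | hdeg
      · exact absurd (unique_nbr hdeg hm₀ hac.symm) (fun hh => hm₀a hh.symm)
      · exact hdeg
    obtain ⟨d, hcd, hda, hdm₀⟩ := hpick c a m₀ hcdeg
    have hfE : s(c, d) ∈ G.edgeSet := (G.mem_edgeSet).mpr hcd
    have hRfxc : R G s(c, d) x c := by
      apply R_of_not_mem_edges qc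
      intro hin
      have hin' : s(c, d) ∈ qc.reverse.edges := by
        rw [Walk.edges_reverse, List.mem_reverse]; exact hin
      rw [hrev₀] at hin'
      simp only [Walk.edges_cons, List.mem_cons] at hin'
      rcases hin' with heq | hmem
      · rw [Sym2.congr_right] at heq
        exact hdm₀ heq
      · have hcr₀ : c ∉ r₀.support := by
          have hqcr : qc.reverse.IsPath := hqc.reverse
          rw [hrev₀] at hqcr
          exact ((Walk.cons_isPath_iff _ _).mp hqcr).2
        exact hcr₀ (vert_mem_support_of_mem_edges r₀ hmem (by simp))
    have hRfxy : R G s(c, d) x y := by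
      apply R_of_not_mem_edges p
      intro hin
      exact hcsupp (vert_mem_support_of_mem_edges p hin (by simp))
    obtain ⟨z, hzdeg, hzs⟩ := exists_leaf_side (X := X) hT hleaf hint hcd
    have hzx : z ≠ x := fun heq => hzs (heq ▸ hRfxc.symm)
    have hzy : z ≠ y := fun heq => hzs (heq ▸ (hRfxc.symm.trans hRfxy))
    have hRfca : R G s(c, d) c a := by
      refine (R_adj hac ?_).symm
      intro heq
      rw [Sym2.eq_iff] at heq
      rcases heq with ⟨ha', hb'⟩ | ⟨ha', hb'⟩
      · exact hac.ne ha'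
      · exact hda ha'.symm
    have hza : z ≠ a := fun heq => hzs (heq ▸ hRfca)
    have hzA : R G s(u, u') x z := by
      by_contra hcon
      have hRu'z : R G s(u, u') u' z := (R_partition hT h2 hnRxu' z).mp hcon
      have hRfxu' : R G s(c, d) x u' := by
        apply R_of_not_mem_edges (Walk.cons h1 (Walk.cons h2 Walk.nil))
        simp only [Walk.edges_cons, Walk.edges_nil, List.mem_cons, List.not_mem_nil, or_false]
        rintro (heq | heq)
        · rw [Sym2.eq_iff] at heq
          rcases heq with ⟨ha', hb'⟩ | ⟨ha', hb'⟩
          · exact hcx ha'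
          · exact hcu ha'
        · rw [Sym2.eq_iff] at heq
          rcases heq with ⟨ha', hb'⟩ | ⟨ha', hb'⟩
          · exact hcu ha'
          · exact absurd ha' (fun hh => hnRxu' (hh ▸ hRxc))
      have hRfcu' : R G s(c, d) c u' := hRfxc.symm.trans hRfxu'
      have hfu'z : ¬ R G s(c, d) u' z := fun h => hzs (hRfcu'.trans h)
      obtain ⟨qq, hqq, -⟩ := hT.existsUnique_path u' z
      have hfmem : s(c, d) ∈ qq.edges := (mem_edges_iff_not_R hT hqq hfE).mpr hfu'z
      have hcsup : c ∈ qq.support := vert_mem_support_of_mem_edges qq hfmem (by simp)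
      have htu : (qq.takeUntil c hcsup).IsPath := hqq.takeUntil hcsup
      have hnRu'c : ¬ R G s(u, u') u' c := fun h => hnRxu' (hRxc.trans h.symm)
      have he₁tu : s(u, u') ∈ (qq.takeUntil c hcsup).edges :=
        (mem_edges_iff_not_R hT htu hE₁).mpr hnRu'c
      have : s(u, u') ∈ qq.edges := qq.edges_takeUntil_subset hcsup he₁tu
      exact ((mem_edges_iff_not_R hT hqq hE₁).mp this) hRu'z
    by_cases hadjcz : G.Adj c z
    · exact compare hT hleaf hw hD hQ hx hy hxyne hmin hadeg hzdeg
        hza.symm hac hadjcz.symm hC1 he₀F hnRxy (hRxa.symm.trans hzA) h₀cnt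
    · -- contradiction with maximality of a
      obtain ⟨qz, hqz, -⟩ := hT.existsUnique_path x z
      have hfxz : ¬ R G s(c, d) x z := fun h => hzs (hRfxc.symm.trans h)
      have hfmem : s(c, d) ∈ qz.edges := (mem_edges_iff_not_R hT hqz hfE).mpr hfxz
      have hcsup : c ∈ qz.support := vert_mem_support_of_mem_edges qz hfmem (by simp)
      have hlen_split : qz.length = (qz.takeUntil c hcsup).length
          + (qz.dropUntil c hcsup).length := by
        conv_lhs => rw [← qz.take_spec hcsup]
        rw [Walk.length_append]
      have htake : (qz.takeUntil c hcsup).length = G.dist x c :=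
        length_eq_dist hT (hqz.takeUntil hcsup)
      have hdrop2 : 2 ≤ (qz.dropUntil c hcsup).length := by
        rcases Nat.lt_or_ge (qz.dropUntil c hcsup).length 2 with hlt | hge
        · exfalso
          have h01 : (qz.dropUntil c hcsup).length = 0
              ∨ (qz.dropUntil c hcsup).length = 1 := by omega
          rcases h01 with hh | hh
          · have heq := Walk.eq_of_length_eq_zero hh
            exact hzs (heq ▸ R.refl G s(c, d) c)
          · exact hadjcz (Walk.adj_of_length_eq_one hh)
        · exact hge
      have hdqc : qc.length = G.dist x c := length_eq_dist hT hqc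
      have hqalen : qa.length = G.dist x c + 1 := by
        rw [hqarev, Walk.length_append, hdqc]
        simp
      have hdista : G.dist x a = G.dist x c + 1 := by
        rw [← length_eq_dist hT hqa, hqalen]
      have hdistz : G.dist x c + 2 ≤ G.dist x z := by
        rw [← length_eq_dist hT hqz, hlen_split, htake]
        omega
      have hzF : z ∈ F := by
        rw [hFdef, Finset.mem_erase, Finset.mem_filter]
        exact ⟨hzx, (hleaf z).mp hzdeg, hzA⟩
      have := hamax z hzF
      omega

end NJAux

open NJAux in
theorem neighbor_joining_cherry_picking'
    {V : Type*} [Fintype V] (G : SimpleGraph V) (X : Finset V)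
    (hT : G.IsTree)
    (hleaf : ∀ v : V, G.degree v = 1 ↔ v ∈ X)
    (hint : ∀ v : V, v ∉ X → 3 ≤ G.degree v)
    (w : Sym2 V → ℝ) (hw : ∀ e ∈ G.edgeSet, 0 < w e)
    (hn : 4 ≤ X.card)
    (D : V → V → ℝ)
    (hD : ∀ a b : V, ∀ p : G.Walk a b, p.IsPath → D a b = (p.edges.map w).sum)
    (Q : V → V → ℝ)
    (hQ : ∀ i j : V, Q i j = (X.card - 2 : ℝ) * D i j
        - ∑ k ∈ X.erase i, D i k - ∑ k ∈ X.erase j, D j k)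
    (x y : V) (hx : x ∈ X) (hy : y ∈ X) (hxy : x ≠ y)
    (hmin : ∀ i ∈ X, ∀ j ∈ X, i ≠ j → Q x y ≤ Q i j) :
    ∃ v : V, G.Adj x v ∧ G.Adj y v := by
  classical
  by_contra hno
  rw [not_exists] at hno
  have hxdeg : G.degree x = 1 := (hleaf x).mpr hx
  have hydeg : G.degree y = 1 := (hleaf y).mpr hy
  -- x and y are not adjacent
  have hAdjxy : ¬ G.Adj x y := by
    intro hadj
    obtain ⟨z, hzX, hzxy⟩ : ∃ z ∈ X, z ∉ ({x, y} : Finset V) := by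
      have hsub : ({x, y} : Finset V) ⊆ X := by
        intro t ht
        rw [Finset.mem_insert, Finset.mem_singleton] at ht
        rcases ht with rfl | rfl
        · exact hx
        · exact hy
      have hcard2 : ({x, y} : Finset V).card ≤ 2 := Finset.card_insert_le _ _ |>.trans (by simp)
      have hpos : 0 < (X \ ({x, y} : Finset V)).card := by
        rw [Finset.card_sdiff_of_subset hsub]; omega
      obtain ⟨z, hz⟩ := Finset.card_pos.mp hpos
      rw [Finset.mem_sdiff] at hz
      exact ⟨z, hz.1, hz.2⟩
    rw [Finset.mem_insert, Finset.mem_singleton, not_or] at hzxy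
    rcases R_dichotomy hT.isConnected hadj z with h | h
    · exact hzxy.1 (R_leaf_eq hxdeg hadj h)
    · have h' : R G s(y, x) y z := by rwa [Sym2.eq_swap] at h
      exact hzxy.2 (R_leaf_eq hydeg hadj.symm h')
  obtain ⟨p, hp, -⟩ := hT.existsUnique_path x y
  revert hp
  rcases p with _ | @⟨_, u, _, h1, p'⟩
  · exact fun _ => hxy rfl
  rcases p' with _ | @⟨_, u', _, h2, p₂⟩
  · exact fun _ => hAdjxy h1
  intro hp
  by_cases hu'y : u' = y
  · subst hu'y
    exact hno u ⟨h1, h2.symm⟩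
  -- basic facts about e₁ = s(u, u')
  have hE₁ : s(u, u') ∈ G.edgeSet := (G.mem_edgeSet).mpr h2
  set p : G.Walk x y := Walk.cons h1 (Walk.cons h2 p₂) with hpdef
  have hpe : p.edges = s(x, u) :: s(u, u') :: p₂.edges := by simp [hpdef]
  have hnodupE : p.edges.Nodup := hp.isTrail.edges_nodup
  have he₁p₂ : s(u, u') ∉ p₂.edges := by
    rw [hpe] at hnodupE
    exact (List.nodup_cons.mp (List.nodup_cons.mp hnodupE).2).1
  have hRu'y : R G s(u, u') u' y := R_of_not_mem_edges p₂ he₁p₂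
  have hnRxy : ¬ R G s(u, u') x y := by
    rw [← mem_edges_iff_not_R hT hp hE₁, hpe]; simp
  have hnRxu' : ¬ R G s(u, u') x u' := fun h => hnRxy (h.trans hRu'y)
  have hsuppP₂ : ∀ m ∈ p₂.support, ¬ R G s(u, u') x m := by
    intro m hm hxm
    have hum : R G s(u, u') u' m := R_of_not_mem_edges (p₂.takeUntil m hm)
      (fun hc => he₁p₂ (p₂.edges_takeUntil_subset hm hc))
    exact hnRxu' (hxm.trans hum.symm)
  -- decompose the reverse path
  obtain ⟨v, g1, v', g2, r₂, hrevEq⟩ : ∃ v : V, ∃ g1 : G.Adj y v, ∃ v' : V,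
      ∃ g2 : G.Adj v v', ∃ r₂ : G.Walk v' x, p.reverse = Walk.cons g1 (Walk.cons g2 r₂) := by
    generalize hg : p.reverse = q
    rcases q with _ | @⟨_, v, _, g1, q'⟩
    · exact absurd rfl hxy
    rcases q' with _ | @⟨_, v', _, g2, r₂⟩
    · exact absurd g1.symm hAdjxy
    exact ⟨v, g1, v', g2, r₂, rfl⟩
  have hprev : (Walk.cons g1 (Walk.cons g2 r₂)).IsPath := by
    rw [← hrevEq]; exact hp.reverse
  have hE₁' : s(v, v') ∈ G.edgeSet := (G.mem_edgeSet).mpr g2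
  have he₁'mem : s(v, v') ∈ p.edges := by
    have : s(v, v') ∈ p.reverse.edges := by rw [hrevEq]; simp
    rwa [Walk.edges_reverse, List.mem_reverse] at this
  have hnRyx : ¬ R G s(v, v') y x := by
    have : ¬ R G s(v, v') x y := by
      rw [← mem_edges_iff_not_R hT hp hE₁']; exact he₁'mem
    exact fun h => this h.symm
  have hvx : v ≠ x := fun heq => hAdjxy (heq ▸ g1).symm
  have hvu : v ≠ u := fun heq => hno u ⟨h1, heq ▸ g1⟩
  have hvp₂ : v ∈ p₂.support := by
    have hvp : v ∈ p.support := by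
      have : v ∈ p.reverse.support := by rw [hrevEq]; simp
      rwa [Walk.support_reverse, List.mem_reverse] at this
    have hps : p.support = x :: u :: p₂.support := by simp [hpdef]
    rw [hps] at hvp
    simp only [List.mem_cons] at hvp
    rcases hvp with h | h | h
    · exact absurd h hvx
    · exact absurd h hvu
    · exact h
  have hnRxv : ¬ R G s(u, u') x v := fun h => hsuppP₂ v hvp₂ h
  -- disjointness of the two leaf sides
  have hdisj : ∀ k, R G s(u, u') x k → R G s(v, v') y k → False := by
    intro k hk1 hk2
    by_cases hee : s(v, v') = s(u, u')
    · rw [hee] at hk2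
      exact hnRxy (hk1.trans hk2.symm)
    · have hnRxy' : ¬ R G s(v, v') x y := fun h => hnRyx h.symm
      have hnRxk' : ¬ R G s(v, v') x k := fun h => hnRxy' (h.trans hk2.symm)
      obtain ⟨qxk, hqxk, -⟩ := hT.existsUnique_path x k
      have hmem' : s(v, v') ∈ qxk.edges := (mem_edges_iff_not_R hT hqxk hE₁').mpr hnRxk'
      have hvsup : v ∈ qxk.support := vert_mem_support_of_mem_edges qxk hmem' (by simp)
      have htake : (qxk.takeUntil v hvsup).IsPath := hqxk.takeUntil hvsup
      have he₁take : s(u, u') ∈ (qxk.takeUntil v hvsup).edges :=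
        (mem_edges_iff_not_R hT htake hE₁).mpr hnRxv
      have : s(u, u') ∈ qxk.edges := qxk.edges_takeUntil_subset hvsup he₁take
      exact ((mem_edges_iff_not_R hT hqxk hE₁).mp this) hk1
  have hdisjF : Disjoint (X.filter (fun k => R G s(u, u') x k))
      (X.filter (fun k => R G s(v, v') y k)) := by
    rw [Finset.disjoint_left]
    intro k hk1 hk2
    rw [Finset.mem_filter] at hk1 hk2
    exact hdisj k hk1.2 hk2.2
  have hcards : (X.filter (fun k => R G s(u, u') x k)).card
      + (X.filter (fun k => R G s(v, v') y k)).card ≤ X.card := by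
    rw [← Finset.card_union_of_disjoint hdisjF]
    apply Finset.card_le_card
    intro k hk
    rw [Finset.mem_union, Finset.mem_filter] at hk
    rcases hk with h | h
    · exact h.1
    · rw [Finset.mem_filter] at h; exact h.1
  by_cases hsmall : 2 * (X.filter (fun k => R G s(u, u') x k)).card ≤ X.card
  · exact key hT hleaf hint hw hD hQ hx hy hxy hmin h1 h2 p₂ hp hu'y hsmall
  · have hsmall' : 2 * (X.filter (fun k => R G s(v, v') y k)).card ≤ X.card := by omega
    have hQsymm : Q y x = Q x y := by
      rw [hQ y x, hQ x y, D_symm hT hD y x]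
      ring
    have hmin' : ∀ i ∈ X, ∀ j ∈ X, i ≠ j → Q y x ≤ Q i j := by
      intro i hi j hj hij
      rw [hQsymm]
      exact hmin i hi j hj hij
    have hv'x : v' ≠ x := by
      intro hveq
      subst hveq
      have hr₂path : r₂.IsPath := (hprev.of_cons).of_cons
      have hr₂nil : r₂ = Walk.nil := (Walk.isPath_iff_eq_nil (p := r₂)).mp hr₂path
      have hlenrev : p.reverse.length = 2 + r₂.length := by
        rw [hrevEq]; simp [Walk.length_cons]; omega
      have hlenp : p.length = 2 + p₂.length := by simp [hpdef]; omega
      rw [Walk.length_reverse] at hlenrev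
      have : p₂.length = 0 := by rw [hr₂nil] at hlenrev; simp at hlenrev; omega
      exact hu'y (Walk.eq_of_length_eq_zero this)
    exact key hT hleaf hint hw hD hQ hy hx hxy.symm hmin' g1 g2 r₂ hprev hv'x hsmall'

/-- Saitou–Nei / Studier–Keppler cherry picking: if `D` is the tree metric
of a positively edge-weighted phylogenetic `X`-tree with `n = |X| ≥ 4` leaves and the pair
`(x, y)` of distinct leaves minimizes
`Q_D(i,j) = (n-2)·D(i,j) - ∑_{k ≠ i} D(i,k) - ∑_{k ≠ j} D(j,k)`,
then `x, y` is a cherry of the tree. -/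
theorem neighbor_joining_cherry_picking
    {V : Type*} [Fintype V] (G : SimpleGraph V) (X : Finset V)
    (hT : G.IsTree)
    (hleaf : ∀ v : V, G.degree v = 1 ↔ v ∈ X)
    (hint : ∀ v : V, v ∉ X → 3 ≤ G.degree v)
    (w : Sym2 V → ℝ) (hw : ∀ e ∈ G.edgeSet, 0 < w e)
    (hn : 4 ≤ X.card)
    -- `D` is the induced tree metric
    (D : V → V → ℝ)
    (hD : ∀ a b : V, ∀ p : G.Walk a b, p.IsPath → D a b = (p.edges.map w).sum)
    -- the neighbor-joining criterion
    (Q : V → V → ℝ)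
    (hQ : ∀ i j : V, Q i j = (X.card - 2 : ℝ) * D i j
        - ∑ k ∈ X.erase i, D i k - ∑ k ∈ X.erase j, D j k)
    (x y : V) (hx : x ∈ X) (hy : y ∈ X) (hxy : x ≠ y)
    -- `(x, y)` minimizes `Q` over all pairs of distinct leaves
    (hmin : ∀ i ∈ X, ∀ j ∈ X, i ≠ j → Q x y ≤ Q i j) :
    -- `x, y` form a cherry: they are adjacent to a common vertex
    ∃ v : V, G.Adj x v ∧ G.Adj y v :=
  neighbor_joining_cherry_picking' G X hT hleaf hint w hw hn D hD Q hQ x y hx hy hxy hmin
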